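/- (Proposition 1, quantitative form) Let G ∈ ℝ₊^{n×n} with out-degrees d_i^out = Σ_j g_{ji}, let d_max^out = max_i d_i^out, let 0 ≤ β < 1 and 0 < δ < 1, and suppose δ(1+β)·d_max^out < 1. Then every entry c_i of the bi-product centrality c = (1/2)·κ(G, δ(1−β)) + (1/2)·κ(G, δ(1+β)) satisfies 1 + δβ·d_i^out ≤ c_i ≤ (1 − δβ·d_max^out) / ((1 − δ(1+β)·d_max^out)·(1 − δ(1−β)·d_max^out)). -/

import Mathlib

open Matrix

/-- Katz–Bonacich centrality `κ(G, a) = (I − a Gᵀ)⁻¹ 1`. -/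
noncomputable def katz {n : ℕ} (G : Matrix (Fin n) (Fin n) ℝ) (a : ℝ) : Fin n → ℝ :=
  (1 - a • Gᵀ)⁻¹ *ᵥ (1 : Fin n → ℝ)

attribute [local instance] Matrix.linftyOpNormedRing Matrix.linftyOpNormedAddCommGroup
  Matrix.linftyOpNormedAlgebra

lemma katz_bounds {n : ℕ} (G : Matrix (Fin n) (Fin n) ℝ) (a dmax : ℝ)
    (hG : ∀ i j, 0 ≤ G i j) (ha : 0 ≤ a)
    (hdmax : IsGreatest (Set.range fun i : Fin n => ∑ j, G j i) dmax)
    (hsmall : a * dmax < 1) (i : Fin n) :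
    1 + a * (∑ j, G j i) ≤ katz G a i ∧ katz G a i ≤ 1 / (1 - a * dmax) := by
  haveI : CompleteSpace (Matrix (Fin n) (Fin n) ℝ) :=
    FiniteDimensional.complete ℝ (Matrix (Fin n) (Fin n) ℝ)
  have hd0 : 0 ≤ dmax := by
    obtain ⟨k, hk⟩ := hdmax.1
    exact hk ▸ Finset.sum_nonneg fun j _ => hG j k
  have hdle : ∀ k : Fin n, (∑ j, G j k) ≤ dmax := fun k => hdmax.2 ⟨k, rfl⟩
  have hnorm : ‖a • Gᵀ‖ ≤ a * dmax := by
    rw [norm_smul, Real.norm_eq_abs, abs_of_nonneg ha]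
    have hT : ‖Gᵀ‖ ≤ dmax := by
      rw [Matrix.linfty_opNorm_def, ← Real.coe_toNNReal dmax hd0, NNReal.coe_le_coe]
      refine Finset.sup_le fun k _ => ?_
      rw [← NNReal.coe_le_coe, Real.coe_toNNReal dmax hd0, NNReal.coe_sum]
      calc (∑ j, (‖Gᵀ k j‖₊ : ℝ)) = ∑ j, G j k := by
            refine Finset.sum_congr rfl fun j _ => ?_
            simp [Matrix.transpose_apply, Real.norm_eq_abs, abs_of_nonneg (hG j k)]
        _ ≤ dmax := hdle k
    exact mul_le_mul_of_nonneg_left hT ha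
  have hlt : ‖a • Gᵀ‖ < 1 := lt_of_le_of_lt hnorm hsmall
  have hA : IsUnit ((1 : Matrix (Fin n) (Fin n) ℝ) - a • Gᵀ) := ⟨Units.oneSub _ hlt, rfl⟩
  have hmul : ((1 : Matrix (Fin n) (Fin n) ℝ) - a • Gᵀ) * (1 - a • Gᵀ)⁻¹ = 1 :=
    Matrix.mul_nonsing_inv _ ((Matrix.isUnit_iff_isUnit_det _).mp hA)
  set v := katz G a with hv
  have hveq : ((1 : Matrix (Fin n) (Fin n) ℝ) - a • Gᵀ) *ᵥ v = 1 := by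
    rw [hv, katz, Matrix.mulVec_mulVec, hmul, Matrix.one_mulVec]
  have heq : ∀ k : Fin n, v k = 1 + a * ∑ j, G j k * v j := by
    intro k
    have h1 := congrFun hveq k
    have h2 : ((1 : Matrix (Fin n) (Fin n) ℝ) - a • Gᵀ) *ᵥ v
        = v - a • (Gᵀ *ᵥ v) := by
      rw [Matrix.sub_mulVec, Matrix.one_mulVec, Matrix.smul_mulVec]
    rw [h2] at h1
    have h3 : v k - a * ∑ j, G j k * v j = 1 := by
      simpa [Matrix.mulVec, dotProduct, Matrix.transpose_apply] using h1
    linarith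
  -- minimum of v is at least 1
  obtain ⟨i0, -, hmin⟩ := Finset.exists_min_image Finset.univ v ⟨i, Finset.mem_univ i⟩
  have hmin' : ∀ j, v i0 ≤ v j := fun j => hmin j (Finset.mem_univ j)
  have hSmin : (∑ j, G j i0) * v i0 ≤ ∑ j, G j i0 * v j := by
    rw [Finset.sum_mul]
    exact Finset.sum_le_sum fun j _ => mul_le_mul_of_nonneg_left (hmin' j) (hG j i0)
  have hm1 : 1 ≤ v i0 := by
    have h0 : v i0 = 1 + a * ∑ j, G j i0 * v j := heq i0
    have hd : (∑ j, G j i0) ≤ dmax := hdle i0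
    have hdn : 0 ≤ ∑ j, G j i0 := Finset.sum_nonneg fun j _ => hG j i0
    rcases le_or_gt 0 (v i0) with hpos | hneg
    · nlinarith [mul_le_mul_of_nonneg_left hSmin ha,
        mul_nonneg (mul_nonneg ha hdn) hpos]
    · exfalso
      have h1 : (∑ j, G j i0) * v i0 ≥ dmax * v i0 :=
        mul_le_mul_of_nonpos_right hd hneg.le
      nlinarith [mul_le_mul_of_nonneg_left hSmin ha]
  have hvk1 : ∀ k, 1 ≤ v k := fun k => le_trans hm1 (hmin' k)
  constructor
  · have h0 : v i = 1 + a * ∑ j, G j i * v j := heq i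
    have hS : (∑ j, G j i) ≤ ∑ j, G j i * v j := by
      refine Finset.sum_le_sum fun j _ => ?_
      nlinarith [hvk1 j, hG j i]
    nlinarith [mul_le_mul_of_nonneg_left hS ha]
  · -- maximum bound
    obtain ⟨i1, -, hmax⟩ := Finset.exists_max_image Finset.univ v ⟨i, Finset.mem_univ i⟩
    have hmax' : ∀ j, v j ≤ v i1 := fun j => hmax j (Finset.mem_univ j)
    have h0 : v i1 = 1 + a * ∑ j, G j i1 * v j := heq i1
    have hS : (∑ j, G j i1 * v j) ≤ (∑ j, G j i1) * v i1 := by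
      rw [Finset.sum_mul]
      exact Finset.sum_le_sum fun j _ => mul_le_mul_of_nonneg_left (hmax' j) (hG j i1)
    have hd : (∑ j, G j i1) ≤ dmax := hdle i1
    have hM1 : 1 ≤ v i1 := hvk1 i1
    have hq : 0 < 1 - a * dmax := by linarith
    have hMle : v i1 ≤ 1 / (1 - a * dmax) := by
      rw [le_div_iff₀ hq]
      nlinarith [mul_le_mul_of_nonneg_left hS ha,
        mul_le_mul_of_nonneg_right (mul_le_mul_of_nonneg_left hd ha) (by linarith : (0:ℝ) ≤ v i1)]
    exact le_trans (hmax' i) hMle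

/-- Proposition 1, quantitative form: if
`δ(1+β) d_max^out < 1`, where `d_max^out = maxᵢ Σⱼ gⱼᵢ`, then every entry of the
bi-product centrality satisfies
`1 + δβ dᵢ^out ≤ cᵢ ≤ (1 − δβ d_max^out)/((1 − δ(1+β)d_max^out)(1 − δ(1−β)d_max^out))`. -/
theorem stmt_16 {n : ℕ} (G : Matrix (Fin n) (Fin n) ℝ) (β δ dmax : ℝ)
    (hG : ∀ i j, 0 ≤ G i j) (hβ0 : 0 ≤ β) (hβ1 : β < 1)
    (hδ0 : 0 < δ) (hδ1 : δ < 1)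
    (hdmax : IsGreatest (Set.range fun i : Fin n => ∑ j, G j i) dmax)
    (hsmall : δ * (1 + β) * dmax < 1) :
    ∀ i : Fin n,
      1 + δ * β * (∑ j, G j i) ≤
        ((1 / 2 : ℝ) • katz G (δ * (1 - β)) + (1 / 2 : ℝ) • katz G (δ * (1 + β))) i ∧
      ((1 / 2 : ℝ) • katz G (δ * (1 - β)) + (1 / 2 : ℝ) • katz G (δ * (1 + β))) i ≤
        (1 - δ * β * dmax) / ((1 - δ * (1 + β) * dmax) * (1 - δ * (1 - β) * dmax)) := by
  intro i
  have hd0 : 0 ≤ dmax := by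
    obtain ⟨k, hk⟩ := hdmax.1
    exact hk ▸ Finset.sum_nonneg fun j _ => hG j k
  have hdn : 0 ≤ ∑ j, G j i := Finset.sum_nonneg fun j _ => hG j i
  have ha1 : (0:ℝ) ≤ δ * (1 - β) := by nlinarith
  have ha2 : (0:ℝ) ≤ δ * (1 + β) := by nlinarith
  have hs1 : δ * (1 - β) * dmax < 1 := by nlinarith
  obtain ⟨hl1, hu1⟩ := katz_bounds G (δ * (1 - β)) dmax hG ha1 hdmax hs1 i
  obtain ⟨hl2, hu2⟩ := katz_bounds G (δ * (1 + β)) dmax hG ha2 hdmax hsmall i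
  have hq : 0 < 1 - δ * (1 + β) * dmax := by linarith
  have hp : 0 < 1 - δ * (1 - β) * dmax := by linarith
  simp only [Pi.add_apply, Pi.smul_apply, smul_eq_mul]
  constructor
  · nlinarith
  · have hsum : (1/2 : ℝ) * katz G (δ * (1 - β)) i + (1/2 : ℝ) * katz G (δ * (1 + β)) i
        ≤ (1/2) * (1 / (1 - δ * (1 - β) * dmax)) + (1/2) * (1 / (1 - δ * (1 + β) * dmax)) := by
      nlinarith
    refine le_trans hsum ?_
    have hkey : (1/2 : ℝ) * (1 / (1 - δ * (1 - β) * dmax)) + 1/2 * (1 / (1 - δ * (1 + β) * dmax))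
        = (1 - δ * dmax) / ((1 - δ * (1 + β) * dmax) * (1 - δ * (1 - β) * dmax)) := by
      rw [eq_div_iff (mul_pos hq hp).ne']
      have e1 := mul_inv_cancel₀ hp.ne'
      have e2 := mul_inv_cancel₀ hq.ne'
      simp only [one_div]
      linear_combination (1/2 * (1 - δ * (1 + β) * dmax)) * e1 + (1/2 * (1 - δ * (1 - β) * dmax)) * e2
    rw [hkey]
    rw [div_le_div_iff₀ (by positivity) (by positivity)]
    nlinarith [mul_nonneg (mul_nonneg (mul_nonneg hδ0.le hd0)
      (by linarith : (0:ℝ) ≤ 1 - β)) (mul_pos hq hp).le]
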